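/- Let 𝔫 be a k-step nilpotent real Lie algebra with associated spectral sequence {E_r^{p,q}}. Then E_∞^{k−1,2−k} ≅ H¹(𝔫) = ker(d : 𝔫* → Λ²𝔫*), and E_∞^{p,1−p} = 0 for all p = 0,…,k−2. -/

import Mathlib

open Module

namespace CE

variable (L : Type) [LieRing L] [LieAlgebra ℝ L]

/-- The space of alternating `p`-forms on `L` with values in `ℝ`. -/
abbrev Form (p : ℕ) := L [⋀^Fin p]→ₗ[ℝ] ℝ

/-- Alternatization, as a linear map. -/
noncomputable def altLin (p : ℕ) :
    MultilinearMap ℝ (fun _ : Fin p => L) ℝ →ₗ[ℝ] Form L p where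
  toFun := MultilinearMap.alternatization
  map_add' _ _ := map_add _ _ _
  map_smul' c m := by
    ext v
    simp only [MultilinearMap.alternatization_apply, MultilinearMap.domDomCongr_apply,
      MultilinearMap.smul_apply, RingHom.id_apply, AlternatingMap.smul_apply,
      Finset.smul_sum]
    exact Finset.sum_congr rfl fun σ _ => smul_comm _ _ _

/-- Inclusion of alternating maps into multilinear maps, as a linear map. -/
noncomputable def toMulti (p : ℕ) :
    Form L p →ₗ[ℝ] MultilinearMap ℝ (fun _ : Fin p => L) ℝ where
  toFun f := f.toMultilinearMap
  map_add' _ _ := rfl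
  map_smul' _ _ := rfl

/-- The Lie bracket of `L` as a bilinear map. -/
noncomputable def bracketL : L →ₗ[ℝ] L →ₗ[ℝ] L :=
  ((LieAlgebra.ad ℝ L) : L →ₗ[ℝ] Module.End ℝ L)

/-- The Chevalley–Eilenberg differential (trivial coefficients):
`(d x)(u₀, …, u_p) = ∑_{i<j} (-1)^{i+j} x([uᵢ, uⱼ], u₀, …, ûᵢ, …, ûⱼ, …, u_p)`,
so that on `1`-forms `(d x)(u, v) = -x ⁅u, v⁆`. -/
noncomputable def ceDiff : ∀ p : ℕ, Form L p →ₗ[ℝ] Form L (p + 1)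
  | 0 => 0
  | (q + 1) =>
    (-(1 : ℝ) / (2 * q.factorial)) •
      ((altLin L (q + 2)).comp
        (((multilinearCurryLeftEquiv ℝ (fun _ : Fin (q + 2) => L) ℝ).symm.toLinearMap).comp
          ((LinearMap.llcomp ℝ L (L →ₗ[ℝ] MultilinearMap ℝ (fun _ : Fin q => L) ℝ)
              (MultilinearMap ℝ (fun _ : Fin (q + 1) => L) ℝ)
              (multilinearCurryLeftEquiv ℝ (fun _ : Fin (q + 1) => L) ℝ).symm.toLinearMap).comp
            (((LinearMap.lcomp ℝ (L →ₗ[ℝ] MultilinearMap ℝ (fun _ : Fin q => L) ℝ)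
                (bracketL L)).comp
              (LinearMap.llcomp ℝ L L (MultilinearMap ℝ (fun _ : Fin q => L) ℝ))).comp
              (((multilinearCurryLeftEquiv ℝ (fun _ : Fin (q + 1) => L) ℝ).toLinearMap).comp
                (toMulti L (q + 1)))))))

/-- The wedge product `β₁ ∧ ⋯ ∧ β_q` of a family of `1`-forms, in determinant
normalization: `(β₁ ∧ ⋯ ∧ β_q)(v₁, …, v_q) = det (βᵢ (v_j))`. -/
noncomputable def wedgeFns {q : ℕ} (β : Fin q → Module.Dual ℝ L) : Form L q :=
  MultilinearMap.alternatization
    ((MultilinearMap.mkPiAlgebra ℝ (Fin q) ℝ).compLinearMap β)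

/-- The subspace `Λ^q V` of `q`-forms spanned by wedges of elements of `V ⊆ 𝔫*`. -/
noncomputable def lambdaPow (V : Submodule ℝ (Module.Dual ℝ L)) (q : ℕ) :
    Submodule ℝ (Form L q) :=
  Submodule.span ℝ
    {x | ∃ β : Fin q → Module.Dual ℝ L, (∀ i, β i ∈ V) ∧ x = wedgeFns L β}

/-- A linear functional viewed as a `1`-form. -/
noncomputable def oneForm : Module.Dual ℝ L →ₗ[ℝ] Form L 1 where
  toFun x := AlternatingMap.ofSubsingleton ℝ L ℝ (0 : Fin 1) x
  map_add' x y := by ext v; simp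
  map_smul' c x := by ext v; simp

/-- The Chevalley–Eilenberg differential on `𝔫* = Λ¹𝔫*`, `(d x)(u,v) = -x ⁅u,v⁆`. -/
noncomputable def dOne : Module.Dual ℝ L →ₗ[ℝ] Form L 2 :=
  (ceDiff L 1).comp (oneForm L)

/-- The `i`-th term `𝔫^i` of the lower central series, as a submodule. -/
noncomputable def lcs (i : ℕ) : Submodule ℝ L :=
  (LieModule.lowerCentralSeries ℝ L L i).toSubmodule

/-- The filtration `V_i = (𝔫^i)°` of `𝔫*` by the annihilators of the lower
central series. -/
noncomputable def Vfil (i : ℕ) : Submodule ℝ (Module.Dual ℝ L) :=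
  (lcs L i).dualAnnihilator

/-- `V_i` for `i : ℤ`, with `V_i = 0` for `i ≤ 0`. -/
noncomputable def VZ (i : ℤ) : Submodule ℝ (Module.Dual ℝ L) := Vfil L i.toNat

/-- `Λ^n V_i` for `i : ℤ`, with the convention coming from the filtration of the
Chevalley–Eilenberg complex: in degree `0` this is `0` for `i ≤ 0` and `ℝ` for `i ≥ 1`. -/
noncomputable def lambdaV (i : ℤ) (n : ℕ) : Submodule ℝ (Form L n) :=
  if i ≤ 0 ∧ n = 0 then ⊥ else lambdaPow L (VZ L i) n

/-- Wedge product of forms. -/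
noncomputable def wedge {a b : ℕ} (x : Form L a) (y : Form L b) : Form L (a + b) :=
  ((LinearMap.mul' ℝ ℝ).compAlternatingMap (x.domCoprod y)).domDomCongr finSumFinEquiv

/-- Cocycles (closed forms). -/
noncomputable def cocycles (n : ℕ) : Submodule ℝ (Form L n) :=
  LinearMap.ker (ceDiff L n)

/-- Coboundaries (exact forms). -/
noncomputable def coboundaries : (n : ℕ) → Submodule ℝ (Form L n)
  | 0 => ⊥
  | (m + 1) => LinearMap.range (ceDiff L m)

/-- Lie algebra cohomology with trivial coefficients `H^n(𝔫) = Z^n/B^n`. -/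
abbrev cohomology (n : ℕ) :=
  @HasQuotient.Quotient ↥(cocycles L n) _ (@Submodule.hasQuotient ℝ ↥(cocycles L n) _ _ _)
    (Submodule.comap (cocycles L n).subtype (coboundaries L n))

/-- Closed forms in `Λ^n V_i`. -/
noncomputable def Zcl (i : ℤ) (n : ℕ) : Submodule ℝ (Form L n) :=
  lambdaV L i n ⊓ LinearMap.ker (ceDiff L n)

/-- `A^{i,j}_n = {x ∈ Λ^n V_i : dx ∈ Λ^{n+1} V_j}`. -/
noncomputable def Aset (i j : ℤ) (n : ℕ) : Submodule ℝ (Form L n) :=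
  lambdaV L i n ⊓ Submodule.comap (ceDiff L n) (lambdaV L j (n + 1))

/-- Denominator of the limit term of the spectral sequence:
`d({x ∈ Λ^{n-1}𝔫* : dx ∈ Λ^n V_i}) + {x ∈ Λ^n V_{i-1} : dx = 0}`. -/
noncomputable def EinfDen (i : ℤ) : (n : ℕ) → Submodule ℝ (Form L n)
  | 0 => Zcl L (i - 1) 0
  | (m + 1) =>
      Submodule.map (ceDiff L m)
          (Submodule.comap (ceDiff L m) (lambdaV L i (m + 1))) ⊔
        Zcl L (i - 1) (m + 1)

/-- The limit term `E_∞^{p,q}` of the spectral sequence of a `k`-step nilpotent Lie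
algebra: `E_∞^{p,q} = {x ∈ Λ^{p+q}V_{k-p} : dx = 0} /
(d{x ∈ Λ^{p+q-1}𝔫* : dx ∈ Λ^{p+q}V_{k-p}} + {x ∈ Λ^{p+q}V_{k-p-1} : dx = 0})`. -/
abbrev Einf (k : ℕ) (p q : ℤ) :=
  @HasQuotient.Quotient ↥(Zcl L ((k : ℤ) - p) (p + q).toNat) _ (@Submodule.hasQuotient ℝ ↥(Zcl L ((k : ℤ) - p) (p + q).toNat) _ _ _)
    (Submodule.comap (Zcl L ((k : ℤ) - p) (p + q).toNat).subtype
      (EinfDen L ((k : ℤ) - p) (p + q).toNat))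

/-- Numerator `A_r^{p,q}` of the `r`-th page term (for `r = 0` it is `F^pC^{p+q} = Λ^{p+q}V_{k-p}`). -/
noncomputable def ErNum (i : ℤ) (r : ℕ) (n : ℕ) : Submodule ℝ (Form L n) :=
  match r with
  | 0 => lambdaV L i n
  | (r' + 1) => Aset L i (i - (r' + 1)) n

/-- Denominator of the `r`-th page term:
`d(A_{r-1}^{p-r+1,q+r-2}) + A_{r-1}^{p+1,q-1}` for `r ≥ 1`, and `F^{p+1}C^{p+q}` for `r = 0`. -/
noncomputable def ErDen (i : ℤ) (r : ℕ) (n : ℕ) : Submodule ℝ (Form L n) :=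
  match r, n with
  | 0, n => lambdaV L (i - 1) n
  | (r' + 1), 0 => Aset L (i - 1) (i - (r' + 1)) 0
  | (r' + 1), (m + 1) =>
      Submodule.map (ceDiff L m)
          (lambdaV L (i + (r' + 1) - 1) m ⊓
            Submodule.comap (ceDiff L m) (lambdaV L i (m + 1))) ⊔
        Aset L (i - 1) (i - (r' + 1)) (m + 1)

/-- The term `E_r^{p,q}` of the spectral sequence of a `k`-step nilpotent Lie algebra. -/
abbrev Er (k r : ℕ) (p q : ℤ) :=
  @HasQuotient.Quotient ↥(ErNum L ((k : ℤ) - p) r (p + q).toNat) _ (@Submodule.hasQuotient ℝ ↥(ErNum L ((k : ℤ) - p) r (p + q).toNat) _ _ _)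
    (Submodule.comap (ErNum L ((k : ℤ) - p) r (p + q).toNat).subtype
      (ErDen L ((k : ℤ) - p) r (p + q).toNat))

end CE


namespace CE
variable (L : Type) [LieRing L] [LieAlgebra ℝ L]

theorem ceDiff_one_apply (f : CE.Form L 1) (u v : L) :
    CE.ceDiff L 1 f ![u, v] = - f ![⁅u, v⁆] := by
  have huniv : (Finset.univ : Finset (Equiv.Perm (Fin 2))) = {1, Equiv.swap 0 1} := by decide
  simp only [CE.ceDiff, CE.altLin, CE.toMulti, CE.bracketL, MultilinearMap.alternatization_apply,
    LinearMap.smul_apply, LinearMap.coe_comp, Function.comp_apply, LinearMap.coe_mk,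
    AddHom.coe_mk, LinearEquiv.coe_coe, AlternatingMap.smul_apply, MultilinearMap.domDomCongr_apply,
    smul_eq_mul, huniv]
  rw [Finset.sum_pair (by decide)]
  simp [multilinearCurryLeftEquiv_apply, multilinearCurryLeftEquiv_symm_apply, LinearMap.llcomp_apply, LinearMap.lcomp_apply,
    Equiv.swap_apply_def, Matrix.cons_val_zero, Matrix.cons_val_one]
  have h1 : (Fin.cons ⁅u, Fin.tail (fun i => ![u, v] i) 0⁆
      (Fin.tail (Fin.tail fun i => ![u, v] i)) : Fin 1 → L) = ![⁅u, v⁆] := by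
    ext i
    fin_cases i
    simp [Fin.tail]
  have h2 : (Fin.cons ⁅v, Fin.tail (fun i => ![u, v] (if i = 0 then 1 else if i = 1 then 0 else i)) 0⁆
      (Fin.tail (Fin.tail fun i => ![u, v] (if i = 0 then 1 else if i = 1 then 0 else i))) : Fin 1 → L)
      = ![⁅v, u⁆] := by
    ext i
    fin_cases i
    simp [Fin.tail]
  rw [h2]
  have h3 : f ![⁅v, u⁆] = - f ![⁅u, v⁆] := by
    have hw : (![⁅v, u⁆] : Fin 1 → L) = Function.update ![⁅u, v⁆] 0 (-⁅u, v⁆) := by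
      ext i
      fin_cases i
      simp
    have hu : (Function.update ![⁅u, v⁆] 0 ⁅u, v⁆ : Fin 1 → L) = ![⁅u, v⁆] := by
      ext i
      fin_cases i
      simp
    rw [hw, AlternatingMap.map_update_neg, hu]
  rw [h3]
  ring

theorem oneForm_apply (x : Module.Dual ℝ L) (v : Fin 1 → L) : oneForm L x v = x (v 0) := rfl

theorem oneForm_bijective : Function.Bijective (oneForm L) :=
  ⟨fun _ _ h => (AlternatingMap.ofSubsingleton ℝ L ℝ (0 : Fin 1)).injective h,
   fun f => ⟨(AlternatingMap.ofSubsingleton ℝ L ℝ (0 : Fin 1)).symm f,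
    (AlternatingMap.ofSubsingleton ℝ L ℝ (0 : Fin 1)).apply_symm_apply f⟩⟩

theorem wedgeFns_one (β : Fin 1 → Module.Dual ℝ L) : wedgeFns L β = oneForm L (β 0) := by
  ext v
  have huniv : (Finset.univ : Finset (Equiv.Perm (Fin 1))) = {1} := by decide
  simp [wedgeFns, MultilinearMap.alternatization_apply, huniv, oneForm_apply]

theorem lambdaV_one (i : ℤ) : lambdaV L i 1 = Submodule.map (oneForm L) (VZ L i) := by
  rw [lambdaV, if_neg (fun h => one_ne_zero h.2), lambdaPow]
  have hset : {x | ∃ β : Fin 1 → Module.Dual ℝ L, (∀ j, β j ∈ VZ L i) ∧ x = wedgeFns L β}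
      = (oneForm L) '' (VZ L i) := by
    ext x
    constructor
    · rintro ⟨β, hβ, rfl⟩
      exact ⟨β 0, hβ 0, (wedgeFns_one L β).symm⟩
    · rintro ⟨y, hy, rfl⟩
      exact ⟨fun _ => y, fun _ => hy, (wedgeFns_one L (fun _ => y)).symm⟩
  rw [hset, ← Submodule.map_span, Submodule.span_eq]

theorem mem_ker_ceDiff_one (f : Form L 1) :
    f ∈ LinearMap.ker (ceDiff L 1) ↔ ∀ u v : L, f ![⁅u, v⁆] = 0 := by
  rw [LinearMap.mem_ker]
  constructor
  · intro h u v
    have h2 : ceDiff L 1 f ![u, v] = 0 := by rw [h]; rfl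
    rw [ceDiff_one_apply, neg_eq_zero] at h2
    exact h2
  · intro h
    ext v
    have hv : v = ![v 0, v 1] := by ext i; fin_cases i <;> rfl
    rw [show (ceDiff L 1 f) v = (ceDiff L 1 f) ![v 0, v 1] by rw [← hv],
      ceDiff_one_apply, h]
    simp

theorem lcs_one_le_ker {x : Module.Dual ℝ L} (h : ∀ u v : L, x ⁅u, v⁆ = 0) :
    lcs L 1 ≤ LinearMap.ker x := by
  rw [lcs, show LieModule.lowerCentralSeries ℝ L L 1 = ⁅(⊤ : LieIdeal ℝ L), (⊤ : LieSubmodule ℝ L L)⁆ by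
    rw [LieModule.lowerCentralSeries_succ, LieModule.lowerCentralSeries_zero],
    LieSubmodule.lieIdeal_oper_eq_linear_span', Submodule.span_le]
  rintro w ⟨a, -, b, -, rfl⟩
  exact h a b

theorem mem_lcs_one (u v : L) : ⁅u, v⁆ ∈ lcs L 1 := by
  rw [lcs, LieSubmodule.mem_toSubmodule,
    show LieModule.lowerCentralSeries ℝ L L 1 = ⁅(⊤ : LieIdeal ℝ L), (⊤ : LieSubmodule ℝ L L)⁆ by
      rw [LieModule.lowerCentralSeries_succ, LieModule.lowerCentralSeries_zero]]
  exact LieSubmodule.lie_mem_lie (LieSubmodule.mem_top u) (LieSubmodule.mem_top v)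

theorem ker_ceDiff_one : LinearMap.ker (ceDiff L 1) = Submodule.map (oneForm L) (Vfil L 1) := by
  ext f
  rw [mem_ker_ceDiff_one]
  constructor
  · intro h
    obtain ⟨x, rfl⟩ := (oneForm_bijective L).2 f
    refine Submodule.mem_map.mpr ⟨x, ?_, rfl⟩
    rw [Vfil, Submodule.mem_dualAnnihilator]
    intro w hw
    exact lcs_one_le_ker L (fun u v => h u v) hw
  · rintro ⟨x, hx, rfl⟩ u v
    exact (Submodule.mem_dualAnnihilator x).1 hx _ (mem_lcs_one L u v)

theorem VZ_zero : VZ L 0 = ⊥ := by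
  rw [VZ, Vfil, lcs]
  simp only [Int.toNat_zero, LieModule.lowerCentralSeries_zero, LieSubmodule.top_toSubmodule]
  exact Submodule.dualAnnihilator_top

theorem Vfil_mono {i j : ℕ} (h : i ≤ j) : Vfil L i ≤ Vfil L j := by
  rw [Vfil, Vfil]
  exact Submodule.dualAnnihilator_anti ((LieSubmodule.toSubmodule_le_toSubmodule _ _).2
    (LieModule.antitone_lowerCentralSeries ℝ L L h))

theorem EinfDen_one (i : ℤ) : EinfDen L i 1 = Zcl L (i - 1) 1 := by
  rw [show (1 : ℕ) = 0 + 1 from rfl, EinfDen, show ceDiff L 0 = 0 from rfl,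
    Submodule.map_zero, bot_sup_eq]

end CE

/-- `E_∞^{k-1,2-k} ≅ H¹(𝔫) = ker (d : 𝔫* → Λ²𝔫*)` and
`E_∞^{p,1-p} = 0` for `p = 0, …, k-2`. -/
theorem statement9 (L : Type) [LieRing L] [LieAlgebra ℝ L]
    [FiniteDimensional ℝ L]
    (k : ℕ) (hk : CE.lcs L k = ⊥) (hk' : CE.lcs L (k - 1) ≠ ⊥) :
    Nonempty (CE.Einf L k ((k : ℤ) - 1) (2 - (k : ℤ)) ≃ₗ[ℝ] CE.cohomology L 1) ∧
      Nonempty (CE.cohomology L 1 ≃ₗ[ℝ] ↥(LinearMap.ker (CE.dOne L))) ∧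
      ∀ p : ℤ, 0 ≤ p → p ≤ (k : ℤ) - 2 → Subsingleton (CE.Einf L k p (1 - p)) := by
  have hker : LinearMap.ker (CE.ceDiff L 1) = Submodule.map (CE.oneForm L) (CE.Vfil L 1) :=
    CE.ker_ceDiff_one L
  have hnum : CE.Zcl L 1 1 = CE.cocycles L 1 := by
    rw [CE.Zcl, CE.lambdaV_one, CE.cocycles, hker]
    rw [show CE.VZ L 1 = CE.Vfil L 1 from rfl, inf_idem]
  have hcohom : Submodule.comap (CE.cocycles L 1).subtype (CE.coboundaries L 1) = ⊥ := by
    rw [show CE.coboundaries L 1 = LinearMap.range (CE.ceDiff L 0) from rfl,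
      show CE.ceDiff L 0 = 0 from rfl, LinearMap.range_zero, Submodule.comap_bot,
      Submodule.ker_subtype]
  have ecohom : CE.cohomology L 1 ≃ₗ[ℝ] ↥(CE.cocycles L 1) :=
    Submodule.quotEquivOfEqBot _ hcohom
  refine ⟨?_, ?_, ?_⟩
  · -- part 1
    have e : ∀ (i : ℤ) (n : ℕ), i = 1 → n = 1 →
        Nonempty ((@HasQuotient.Quotient ↥(CE.Zcl L i n) _ (@Submodule.hasQuotient ℝ ↥(CE.Zcl L i n) _ _ _)
          (Submodule.comap (CE.Zcl L i n).subtype (CE.EinfDen L i n))) ≃ₗ[ℝ]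
            CE.cohomology L 1) := by
      rintro i n rfl rfl
      have hden : Submodule.comap (CE.Zcl L 1 1).subtype (CE.EinfDen L 1 1) = ⊥ := by
        have hd : CE.EinfDen L 1 1 = ⊥ := by
          rw [CE.EinfDen_one, CE.Zcl, CE.lambdaV_one, show (1 : ℤ) - 1 = 0 from rfl,
            CE.VZ_zero, Submodule.map_bot, bot_inf_eq]
        rw [hd, Submodule.comap_bot, Submodule.ker_subtype]
      exact ⟨(Submodule.quotEquivOfEqBot _ hden).trans
        ((LinearEquiv.ofEq _ _ hnum).trans ecohom.symm)⟩
    exact e _ _ (by ring) (by rw [show ((k : ℤ) - 1 + (2 - (k : ℤ))) = 1 by ring]; rfl)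
  · -- part 2
    have hmem : ∀ x ∈ LinearMap.ker (CE.dOne L), CE.oneForm L x ∈ CE.cocycles L 1 := by
      intro x hx
      rw [CE.cocycles, LinearMap.mem_ker]
      exact hx
    have hbij : Function.Bijective ((CE.oneForm L).restrict hmem) := by
      constructor
      · intro a b hab
        have h3 : CE.oneForm L a.1 = CE.oneForm L b.1 := congrArg Subtype.val hab
        exact Subtype.ext ((CE.oneForm_bijective L).1 h3)
      · rintro ⟨f, hf⟩
        obtain ⟨x, rfl⟩ := (CE.oneForm_bijective L).2 f
        have hx : x ∈ LinearMap.ker (CE.dOne L) := by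
          rw [LinearMap.mem_ker]
          exact hf
        exact ⟨⟨x, hx⟩, rfl⟩
    exact ⟨ecohom.trans (LinearEquiv.ofBijective _ hbij).symm⟩
  · -- part 3
    intro p hp0 hpk
    have e : ∀ (i : ℤ) (n : ℕ), 2 ≤ i → n = 1 →
        Subsingleton (@HasQuotient.Quotient ↥(CE.Zcl L i n) _ (@Submodule.hasQuotient ℝ ↥(CE.Zcl L i n) _ _ _)
          (Submodule.comap (CE.Zcl L i n).subtype (CE.EinfDen L i n))) := by
      rintro i n hi rfl
      refine Submodule.Quotient.subsingleton_iff.2 ?_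
      rw [Submodule.comap_subtype_eq_top,
        CE.EinfDen_one]
      have h1 : CE.Zcl L i 1 ≤ LinearMap.ker (CE.ceDiff L 1) := by
        rw [CE.Zcl]
        exact inf_le_right
      refine h1.trans (le_inf ?_ (le_refl _))
      rw [CE.lambdaV_one, hker]
      refine Submodule.map_mono (CE.Vfil_mono L ?_)
      show (1 : ℕ) ≤ (i - 1).toNat
      omega
    exact e _ _ (by omega) (by rw [show (p + (1 - p) : ℤ) = 1 by ring]; rfl)
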